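/- Strict compatibility with the Hodge filtration: every morphism f : (V, W, F) → (V', W', F') of mixed Hodge structures is strictly compatible with the Hodge filtrations, i.e. f_ℂ(F^p) = range(f_ℂ) ∩ F'^p for every integer p, where f_ℂ := id_ℂ ⊗ f. -/

import Mathlib

open scoped TensorProduct

private lemma sigmaC_aux (V : Type*) [AddCommGroup V] [Module ℝ V] (c : ℂ) (x : ℂ ⊗[ℝ] V) :
    TensorProduct.map Complex.conjAe.toLinearMap LinearMap.id (c • x) =
      (starRingEnd ℂ) c • TensorProduct.map Complex.conjAe.toLinearMap LinearMap.id x := by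
  induction x using TensorProduct.induction_on with
  | zero => simp
  | tmul z v => simp [TensorProduct.smul_tmul', smul_eq_mul, map_mul]
  | add x y hx hy => simp only [smul_add, map_add, hx, hy]

/-- The conjugation involution `σ` of the complexification `ℂ ⊗[ℝ] V`,
as a `conj`-semilinear map. -/
noncomputable def sigmaC (V : Type*) [AddCommGroup V] [Module ℝ V] :
    (ℂ ⊗[ℝ] V) →ₛₗ[starRingEnd ℂ] (ℂ ⊗[ℝ] V) where
  toFun := TensorProduct.map Complex.conjAe.toLinearMap LinearMap.id
  map_add' x y := map_add _ x y
  map_smul' c x := sigmaC_aux V c x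

/-- A mixed Hodge structure on a real vector space `V`: an increasing, bounded, exhaustive
weight filtration `W` of `V` by real subspaces and a decreasing, bounded, exhaustive Hodge
filtration `F` of `V_ℂ = ℂ ⊗[ℝ] V` by complex subspaces, such that for every `n` the
filtration induced by `F` on `Gr^W_n = W_n / W_{n-1}` is a Hodge filtration of weight `n`.

Identifying the complexification of `Gr^W_n` with `(W_n)_ℂ / (W_{n-1})_ℂ` (where
`(W_n)_ℂ := (W n).baseChange ℂ ⊆ V_ℂ`), the Hodge filtration condition of weight `n` on
`Gr^W_n` — namely `F^p(Gr^W_n)_ℂ ⊕ σ(F^{n-p+1}(Gr^W_n)_ℂ) = (Gr^W_n)_ℂ` for all `p`, where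
`F^p(Gr^W_n)_ℂ` is the image of `F^p ⊓ (W_n)_ℂ` — is expressed below by pulling back along
the quotient map `(W_n)_ℂ → (W_n)_ℂ / (W_{n-1})_ℂ`: the first displayed equation is the
disjointness of the two images in the quotient, the second their spanning of the quotient. -/
def IsMixedHodgeStructure (V : Type*) [AddCommGroup V] [Module ℝ V]
    (W : ℤ → Submodule ℝ V) (F : ℤ → Submodule ℂ (ℂ ⊗[ℝ] V)) : Prop :=
  Monotone W ∧
  (∃ a : ℤ, ∀ n ≤ a, W n = ⊥) ∧
  (∃ b : ℤ, ∀ n ≥ b, W n = ⊤) ∧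
  (∀ p : ℤ, F (p + 1) ≤ F p) ∧
  (∃ a : ℤ, ∀ p ≤ a, F p = ⊤) ∧
  (∃ b : ℤ, ∀ p ≥ b, F p = ⊥) ∧
  (∀ n p : ℤ,
    ((F p ⊓ (W n).baseChange ℂ) ⊔ (W (n - 1)).baseChange ℂ) ⊓
        (((F (n - p + 1) ⊓ (W n).baseChange ℂ).map (sigmaC V)) ⊔ (W (n - 1)).baseChange ℂ)
      = (W (n - 1)).baseChange ℂ ∧
    (F p ⊓ (W n).baseChange ℂ) ⊔ ((F (n - p + 1) ⊓ (W n).baseChange ℂ).map (sigmaC V))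
        ⊔ (W (n - 1)).baseChange ℂ
      = (W n).baseChange ℂ)

section BasicAux
variable {V V' : Type*} [AddCommGroup V] [Module ℝ V] [AddCommGroup V'] [Module ℝ V']

private lemma sigmaC_tmul (z : ℂ) (v : V) : sigmaC V (z ⊗ₜ[ℝ] v) = (starRingEnd ℂ) z ⊗ₜ[ℝ] v := rfl

private lemma sigmaC_sigmaC (x : ℂ ⊗[ℝ] V) : sigmaC V (sigmaC V x) = x := by
  induction x using TensorProduct.induction_on with
  | zero => simp
  | tmul z v => simp [sigmaC_tmul]
  | add x y hx hy => simp only [map_add, hx, hy]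

private lemma sigmaC_mem_baseChange {p : Submodule ℝ V} {x : ℂ ⊗[ℝ] V}
    (hx : x ∈ p.baseChange ℂ) : sigmaC V x ∈ p.baseChange ℂ := by
  rw [Submodule.baseChange_eq_span] at hx
  induction hx using Submodule.span_induction with
  | mem x hx =>
      obtain ⟨m, hm, rfl⟩ := hx
      exact Submodule.tmul_mem_baseChange_of_mem _ hm
  | zero => simp
  | add x y _ _ hx hy => rw [map_add]; exact Submodule.add_mem _ hx hy
  | smul c x _ hx => rw [LinearMap.map_smulₛₗ]; exact Submodule.smul_mem _ _ hx

private lemma baseChange_mono' {p q : Submodule ℝ V} (h : p ≤ q) :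
    p.baseChange ℂ ≤ q.baseChange ℂ :=
  Submodule.baseChange_mono (A := ℂ) h

private lemma baseChange_map_le (f : V →ₗ[ℝ] V') {p : Submodule ℝ V} {q : Submodule ℝ V'}
    (h : p.map f ≤ q) {x : ℂ ⊗[ℝ] V} (hx : x ∈ p.baseChange ℂ) :
    f.baseChange ℂ x ∈ q.baseChange ℂ := by
  rw [Submodule.baseChange_eq_span] at hx
  induction hx using Submodule.span_induction with
  | mem x hx =>
      obtain ⟨m, hm, rfl⟩ := hx
      exact Submodule.tmul_mem_baseChange_of_mem _ (h ⟨m, hm, rfl⟩)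
  | zero => simp
  | add x y _ _ hx hy => rw [map_add]; exact Submodule.add_mem _ hx hy
  | smul c x _ hx => rw [LinearMap.map_smul]; exact Submodule.smul_mem _ _ hx

private lemma sigmaC_baseChange_comm (f : V →ₗ[ℝ] V') (x : ℂ ⊗[ℝ] V) :
    f.baseChange ℂ (sigmaC V x) = sigmaC V' (f.baseChange ℂ x) := by
  induction x using TensorProduct.induction_on with
  | zero => simp
  | tmul z v => simp [sigmaC_tmul, LinearMap.baseChange_tmul]
  | add x y hx hy => simp only [map_add, hx, hy]

private lemma mem_biSup_iff_exists_finsupp' {R M : Type*} [Semiring R] [AddCommMonoid M]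
    [Module R M] {ι : Type*} (J : ι → Submodule R M) (P : ι → Prop) (x : M) :
    x ∈ (⨆ i, ⨆ (_ : P i), J i) ↔
      ∃ c : ι →₀ M, (∀ i, c i ∈ J i) ∧ (∀ i, ¬ P i → c i = 0) ∧ (c.sum fun _ v => v) = x := by
  rw [Submodule.mem_iSup_iff_exists_finsupp]
  constructor
  · rintro ⟨c, hc, rfl⟩
    refine ⟨c, fun i => ?_, fun i hi => ?_, rfl⟩
    · exact (iSup_le (fun _ => le_rfl) : (⨆ (_ : P i), J i) ≤ J i) (hc i)
    · have := hc i
      rw [iSup_neg hi] at this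
      simpa using this
  · rintro ⟨c, hc, hc0, rfl⟩
    refine ⟨c, fun i => ?_, rfl⟩
    by_cases hi : P i
    · exact (le_iSup (fun (_ : P i) => J i) hi) (hc i)
    · rw [hc0 i hi]; exact Submodule.zero_mem _

end BasicAux

namespace MHSproof
variable {V : Type*} [AddCommGroup V] [Module ℝ V]
variable (W : ℤ → Submodule ℝ V) (F : ℤ → Submodule ℂ (ℂ ⊗[ℝ] V))

noncomputable def Wc (n : ℤ) : Submodule ℂ (ℂ ⊗[ℝ] V) := (W n).baseChange ℂ

noncomputable def Ipq (p q : ℤ) : Submodule ℂ (ℂ ⊗[ℝ] V) :=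
  (F p ⊓ Wc W (p + q)) ⊓
    ((F q ⊓ Wc W (p + q)).map (sigmaC V) ⊔
      ⨆ j : ℕ, (F (q - j - 1) ⊓ Wc W (p + q - j - 2)).map (sigmaC V))

noncomputable def Hh (m r : ℤ) : Submodule ℂ (ℂ ⊗[ℝ] V) :=
  ((F r ⊓ Wc W m) ⊔ Wc W (m - 1)) ⊓
    ((F (m - r) ⊓ Wc W m).map (sigmaC V) ⊔ Wc W (m - 1))

noncomputable def ISum (P : ℤ × ℤ → Prop) : Submodule ℂ (ℂ ⊗[ℝ] V) :=
  ⨆ rs : ℤ × ℤ, ⨆ (_ : P rs), Ipq W F rs.1 rs.2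

variable {W F}

/-- The hypotheses we extract from `IsMixedHodgeStructure`. -/
structure Hyp (W : ℤ → Submodule ℝ V) (F : ℤ → Submodule ℂ (ℂ ⊗[ℝ] V)) where
  hWmono : Monotone W
  aW : ℤ
  haW : ∀ n ≤ aW, W n = ⊥
  hFanti : Antitone F
  aF : ℤ
  haF : ∀ p ≤ aF, F p = ⊤
  bF : ℤ
  hbF : ∀ p ≥ bF, F p = ⊥
  hyp1 : ∀ n p : ℤ, ((F p ⊓ Wc W n) ⊔ Wc W (n - 1)) ⊓
      ((F (n - p + 1) ⊓ Wc W n).map (sigmaC V) ⊔ Wc W (n - 1)) = Wc W (n - 1)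
  hyp2 : ∀ n p : ℤ, (F p ⊓ Wc W n) ⊔ ((F (n - p + 1) ⊓ Wc W n).map (sigmaC V))
      ⊔ Wc W (n - 1) = Wc W n

lemma Wc_mono (h : Hyp W F) {m n : ℤ} (hmn : m ≤ n) : Wc W m ≤ Wc (V := V) W n :=
  Submodule.baseChange_mono (A := ℂ) (h.hWmono hmn)

lemma Wc_bot (h : Hyp W F) {n : ℤ} (hn : n ≤ h.aW) : Wc (V := V) W n = ⊥ := by
  rw [Wc, h.haW n hn, Submodule.baseChange_bot]

lemma sigma_inf_Wc_le (A : Submodule ℂ (ℂ ⊗[ℝ] V)) (n : ℤ) :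
    (A ⊓ Wc W n).map (sigmaC V) ≤ Wc W n := by
  rintro x ⟨y, hy, rfl⟩
  exact sigmaC_mem_baseChange hy.2

lemma Ipq_le_F (p q : ℤ) : Ipq W F p q ≤ F p := inf_le_left.trans inf_le_left

lemma Ipq_le_Wc (p q : ℤ) : Ipq W F p q ≤ Wc W (p + q) := inf_le_left.trans inf_le_right

lemma Ipq_le_Hh (h : Hyp W F) (p q : ℤ) : Ipq W F p q ≤ Hh W F (p + q) p := by
  have e : p + q - p = q := by ring
  refine le_inf (inf_le_left.trans le_sup_left) (inf_le_right.trans (sup_le ?_ ?_))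
  · rw [e]; exact le_sup_left
  · refine iSup_le fun j => le_trans ?_ le_sup_right
    exact le_trans (sigma_inf_Wc_le _ _) (Wc_mono h (by omega))

/-- Pure "spanning" lemma on the associated graded of weight `m`. -/
lemma PS (h : Hyp W F) (m : ℤ) (p : ℤ) :
    (F p ⊓ Wc W m) ⊔ Wc W (m - 1) ≤ ⨆ r : ℤ, ⨆ (_ : p ≤ r), Hh W F m r := by
  have hWle : ∀ r : ℤ, Wc W (m - 1) ≤ Hh W F m r := fun r => le_inf le_sup_right le_sup_right
  have key : ∀ (k : ℕ) (p : ℤ), h.bF ≤ p + k →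
      (F p ⊓ Wc W m) ⊔ Wc W (m - 1) ≤ ⨆ r : ℤ, ⨆ (_ : p ≤ r), Hh W F m r := by
    intro k
    induction k with
    | zero =>
        intro p hp
        rw [h.hbF p (by push_cast at hp; omega), bot_inf_eq, bot_sup_eq]
        exact le_trans (hWle p) (le_iSup₂ (f := fun r (_ : p ≤ r) => Hh W F m r) p le_rfl)
    | succ k ih =>
        intro p hp
        have hsub : (⨆ r : ℤ, ⨆ (_ : p + 1 ≤ r), Hh W F m r) ≤
            ⨆ r : ℤ, ⨆ (_ : p ≤ r), Hh W F m r :=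
          iSup_mono fun r => iSup_le fun hr =>
            le_iSup (fun (_ : p ≤ r) => Hh W F m r) (by omega)
        have hHle : Hh W F m p ≤ ⨆ r : ℤ, ⨆ (_ : p ≤ r), Hh W F m r :=
          le_iSup₂ (f := fun r (_ : p ≤ r) => Hh W F m r) p le_rfl
        intro x hx
        rcases Submodule.mem_sup.mp hx with ⟨x₀, hx₀, w₀, hw₀, rfl⟩
        have h2 := h.hyp2 m (p + 1)
        rw [show m - (p + 1) + 1 = m - p by ring] at h2
        have hx₀' : x₀ ∈ (F (p + 1) ⊓ Wc W m) ⊔ (F (m - p) ⊓ Wc W m).map (sigmaC V)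
            ⊔ Wc W (m - 1) := by rw [h2]; exact hx₀.2
        rcases Submodule.mem_sup.mp hx₀' with ⟨y, hy, w, hw, hxy⟩
        rcases Submodule.mem_sup.mp hy with ⟨a, ha, sb, hsb, rfl⟩
        have ha' : a ∈ F p ⊓ Wc W m :=
          ⟨h.hFanti (by omega) ha.1, ha.2⟩
        have hsbH : sb ∈ Hh W F m p := by
          refine Submodule.mem_inf.mpr ⟨?_, Submodule.mem_sup.mpr ⟨sb, hsb, 0, Submodule.zero_mem _, add_zero _⟩⟩
          refine Submodule.mem_sup.mpr ⟨x₀ - a, Submodule.sub_mem _ hx₀ ha', -w, Submodule.neg_mem _ hw, ?_⟩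
          have : x₀ = a + sb + w := hxy.symm
          rw [this]; abel
        have hxeq : x₀ + w₀ = a + (sb + (w + w₀)) := by rw [← hxy]; abel
        rw [hxeq]
        refine Submodule.add_mem _ ?_ (Submodule.add_mem _ (hHle hsbH) (hHle (hWle p (Submodule.add_mem _ hw hw₀))))
        refine hsub (ih (p + 1) (by push_cast; omega) ?_)
        exact Submodule.mem_sup.mpr ⟨a, ha, 0, Submodule.zero_mem _, add_zero _⟩
  intro x hx
  exact key (h.bF - p).toNat p (by omega) hx

/-- Pure "independence" lemma on the associated graded of weight `m`. -/
lemma PI (h : Hyp W F) (m : ℤ) (c : ℤ →₀ (ℂ ⊗[ℝ] V)) (hc : ∀ r, c r ∈ Hh W F m r)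
    (hsum : (c.sum fun _ v => v) ∈ Wc W (m - 1)) : ∀ r, c r ∈ Wc W (m - 1) := by
  classical
  have key : ∀ (k : ℕ) (r : ℤ), r ≤ m - h.bF + k → c r ∈ Wc W (m - 1) := by
    intro k
    induction k with
    | zero =>
        intro r hr
        have hF : F (m - r) = ⊥ := h.hbF _ (by push_cast at hr; omega)
        have := (hc r).2
        rw [hF, bot_inf_eq, Submodule.map_bot, bot_sup_eq] at this
        exact this
    | succ k ih =>
        intro r hr
        by_cases hr' : r ≤ m - h.bF + k
        · exact ih r hr'
        · -- write c r as total sum minus the lower and higher parts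
          by_cases hrS : r ∈ c.support
          · have hsplit : (c.sum fun _ v => v)
                = (∑ y ∈ (c.support.erase r).filter (fun y => y < r), c y)
                + (∑ y ∈ (c.support.erase r).filter (fun y => ¬ y < r), c y) + c r := by
              rw [Finsupp.sum, ← Finset.sum_erase_add c.support _ hrS,
                Finset.sum_filter_add_sum_filter_not]
            have hA : c r ∈ (F (r + 1) ⊓ Wc W m) ⊔ Wc W (m - 1) := by
              have h1 : (∑ y ∈ (c.support.erase r).filter (fun y => y < r), c y)
                  ∈ Wc W (m - 1) := by
                refine Submodule.sum_mem _ fun y hy => ?_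
                simp only [Finset.mem_filter] at hy
                exact ih y (by omega)
              have h2 : (∑ y ∈ (c.support.erase r).filter (fun y => ¬ y < r), c y)
                  ∈ (F (r + 1) ⊓ Wc W m) ⊔ Wc W (m - 1) := by
                refine Submodule.sum_mem _ fun y hy => ?_
                simp only [Finset.mem_filter, Finset.mem_erase] at hy
                have hy1 : r + 1 ≤ y := by omega
                rcases Submodule.mem_sup.mp (hc y).1 with ⟨a, ha, w, hw, hyw⟩
                exact Submodule.mem_sup.mpr ⟨a, ⟨h.hFanti hy1 ha.1, ha.2⟩, w, hw, hyw⟩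
              have hcr : c r = (c.sum fun _ v => v)
                  - (∑ y ∈ (c.support.erase r).filter (fun y => y < r), c y)
                  - (∑ y ∈ (c.support.erase r).filter (fun y => ¬ y < r), c y) := by
                rw [hsplit]; abel
              rw [hcr]
              refine Submodule.sub_mem _ (Submodule.sub_mem _ ?_ ?_) h2
              · exact le_sup_right (α := Submodule ℂ (ℂ ⊗[ℝ] V)) hsum
              · exact le_sup_right (α := Submodule ℂ (ℂ ⊗[ℝ] V)) h1
            have h1 := h.hyp1 m (r + 1)
            rw [show m - (r + 1) + 1 = m - r by ring] at h1
            rw [← h1]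
            exact Submodule.mem_inf.mpr ⟨hA, (hc r).2⟩
          · rw [Finsupp.notMem_support_iff.mp hrS]
            exact Submodule.zero_mem _
  intro r
  exact key (r - (m - h.bF)).toNat r (by omega)

lemma PI2 (h : Hyp W F) (m p : ℤ) (c : ℤ →₀ (ℂ ⊗[ℝ] V)) (hc : ∀ r, c r ∈ Hh W F m r)
    (hc0 : ∀ r, p ≤ r → c r = 0)
    (hsum : (c.sum fun _ v => v) ∈ (F p ⊓ Wc W m) ⊔ Wc W (m - 1)) :
    ∀ r, c r ∈ Wc W (m - 1) := by
  rcases Submodule.mem_sup.mp hsum with ⟨x₀, hx₀, w₀, hw₀, hsum'⟩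
  have hx₀' : x₀ ∈ ⨆ r : ℤ, ⨆ (_ : p ≤ r), Hh W F m r :=
    PS h m p (Submodule.mem_sup.mpr ⟨x₀, hx₀, 0, Submodule.zero_mem _, add_zero _⟩)
  rcases (mem_biSup_iff_exists_finsupp' _ _ _).mp hx₀' with ⟨c', hc', hc0', hsum''⟩
  have hd : ∀ r, (c - c') r ∈ Hh W F m r := fun r => by
    rw [Finsupp.sub_apply]; exact Submodule.sub_mem _ (hc r) (hc' r)
  have hdsum : ((c - c').sum fun _ v => v) ∈ Wc W (m - 1) := by
    rw [Finsupp.sum_sub_index (fun _ _ _ => rfl), hsum'']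
    have : (c.sum fun _ v => v) - x₀ = w₀ := by rw [← hsum']; abel
    rw [this]; exact hw₀
  have hPI := PI h m (c - c') hd hdsum
  intro r
  by_cases hr : p ≤ r
  · rw [hc0 r hr]; exact Submodule.zero_mem _
  · have : c r = (c - c') r := by
      rw [Finsupp.sub_apply, hc0' r hr, sub_zero]
    rw [this]; exact hPI r

lemma sigmaC_mem_Wc {n : ℤ} {x : ℂ ⊗[ℝ] V} (hx : x ∈ Wc W n) : sigmaC V x ∈ Wc W n :=
  sigmaC_mem_baseChange hx

/-- `I^{p,q}` meets `W_{p+q-1}` trivially. -/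
lemma Iinj (h : Hyp W F) (p q : ℤ) {x : ℂ ⊗[ℝ] V} (hx : x ∈ Ipq W F p q)
    (hx' : x ∈ Wc W (p + q - 1)) : x = 0 := by
  classical
  obtain ⟨hxF, hxσ⟩ := hx
  rcases Submodule.mem_sup.mp hxσ with ⟨sy, hsy, t, ht, hxd⟩
  rcases (Submodule.mem_iSup_iff_exists_finsupp _ _).mp ht with ⟨cJ, hcJ, hsumJ⟩
  obtain ⟨y₀, hy₀, hy₀σ⟩ := hsy
  have hych : ∀ j : ℕ, ∃ z, z ∈ F (q - j - 1) ⊓ Wc W (p + q - j - 2) ∧ sigmaC V z = cJ j :=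
    fun j => hcJ j
  choose y hy hyσ using hych
  have hcJW : ∀ j : ℕ, cJ j ∈ Wc W (p + q - j - 2) := by
    intro j
    rw [← hyσ j]
    exact sigmaC_mem_Wc (hy j).2
  have main : ∀ i : ℕ, x ∈ Wc W (p + q - 1 - i) := by
    intro i
    induction i with
    | zero => simpa using hx'
    | succ i ih =>
        set Y : ℂ ⊗[ℝ] V := y₀ + ∑ j ∈ cJ.support.filter (fun j => j < i), y j with hY
        have hRmem : (∑ j ∈ cJ.support.filter (fun j => ¬ j < i), cJ j)
            ∈ Wc W (p + q - 1 - (i + 1)) := by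
          refine Submodule.sum_mem _ fun j hj => ?_
          simp only [Finset.mem_filter] at hj
          exact Wc_mono h (by omega) (hcJW j)
        have hσY : sigmaC V Y = sy + ∑ j ∈ cJ.support.filter (fun j => j < i), cJ j := by
          rw [hY, map_add, map_sum]
          rw [hy₀σ]
          congr 1
          exact Finset.sum_congr rfl fun j _ => hyσ j
        have hxRY : x = sigmaC V Y + (∑ j ∈ cJ.support.filter (fun j => ¬ j < i), cJ j) := by
          rw [hσY, ← hxd]
          have : t = (∑ j ∈ cJ.support.filter (fun j => j < i), cJ j)
              + ∑ j ∈ cJ.support.filter (fun j => ¬ j < i), cJ j := by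
            rw [Finset.sum_filter_add_sum_filter_not, ← hsumJ]; rfl
          rw [this]; abel
        have hσYW : sigmaC V Y ∈ Wc W (p + q - 1 - i) := by
          have : sigmaC V Y = x - ∑ j ∈ cJ.support.filter (fun j => ¬ j < i), cJ j := by
            rw [hxRY]; abel
          rw [this]
          exact Submodule.sub_mem _ ih (Wc_mono h (by omega) hRmem)
        have hYW : Y ∈ Wc W (p + q - 1 - i) := by
          have := sigmaC_mem_Wc (W := W) hσYW
          rwa [sigmaC_sigmaC] at this
        have hYF : Y ∈ F (q - i) := by
          rw [hY]
          refine Submodule.add_mem _ (h.hFanti (by omega) hy₀.1) ?_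
          refine Submodule.sum_mem _ fun j hj => ?_
          simp only [Finset.mem_filter] at hj
          exact h.hFanti (by omega) (hy j).1
        have h1 := h.hyp1 (p + q - 1 - i) p
        rw [show p + q - 1 - i - p + 1 = q - i by ring] at h1
        have hxmem : x ∈ ((F p ⊓ Wc W (p + q - 1 - i)) ⊔ Wc W (p + q - 1 - i - 1)) ⊓
            ((F (q - i) ⊓ Wc W (p + q - 1 - i)).map (sigmaC V) ⊔ Wc W (p + q - 1 - i - 1)) := by
          constructor
          · exact Submodule.mem_sup.mpr ⟨x, ⟨hxF.1, ih⟩, 0, Submodule.zero_mem _, add_zero _⟩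
          · refine Submodule.mem_sup.mpr ⟨sigmaC V Y, ⟨Y, ⟨hYF, hYW⟩, rfl⟩,
              ∑ j ∈ cJ.support.filter (fun j => ¬ j < i), cJ j, ?_, hxRY.symm⟩
            have : p + q - 1 - (i + 1 : ℕ) = p + q - 1 - i - 1 := by push_cast; ring
            rw [← this]; exact hRmem
        rw [h1] at hxmem
        have : p + q - 1 - i - 1 = p + q - 1 - (i + 1 : ℕ) := by push_cast; ring
        rwa [this] at hxmem
  have hfin := main (p + q - 1 - h.aW).toNat
  rw [Wc_bot h (by omega)] at hfin
  simpa using hfin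

lemma I_le_T (h : Hyp W F) {m r r' s' : ℤ} (h1 : r' < r) (h2 : r' + s' ≤ m - 1) :
    Ipq W F r' s' ≤ (F (m - r) ⊓ Wc W m).map (sigmaC V) ⊔
      ⨆ j : ℕ, (F (m - r - j - 1) ⊓ Wc W (m - j - 2)).map (sigmaC V) := by
  refine inf_le_right.trans (sup_le ?_ (iSup_le fun i => ?_))
  · by_cases hk : r' + s' = m - 1
    · exact le_trans (Submodule.map_mono
        (inf_le_inf (h.hFanti (by omega)) (Wc_mono h (by omega)))) le_sup_left
    · set j : ℕ := (m - 2 - (r' + s')).toNat with hjd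
      have hj : (j : ℤ) = m - 2 - (r' + s') := Int.toNat_of_nonneg (by omega)
      have step : (F s' ⊓ Wc W (r' + s')).map (sigmaC V) ≤
          (F (m - r - j - 1) ⊓ Wc W (m - j - 2)).map (sigmaC V) := by
        rw [show m - (j : ℤ) - 2 = r' + s' by omega]
        exact Submodule.map_mono (inf_le_inf (h.hFanti (by omega)) le_rfl)
      exact step.trans (le_trans
        (le_iSup (fun j : ℕ => (F (m - r - j - 1) ⊓ Wc W (m - j - 2)).map (sigmaC V)) j)
        le_sup_right)
  · set j : ℕ := (m - (r' + s') + i).toNat with hjd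
    have hj : (j : ℤ) = m - (r' + s') + i := Int.toNat_of_nonneg (by omega)
    have step : (F (s' - i - 1) ⊓ Wc W (r' + s' - i - 2)).map (sigmaC V) ≤
        (F (m - r - j - 1) ⊓ Wc W (m - j - 2)).map (sigmaC V) := by
      rw [show m - (j : ℤ) - 2 = r' + s' - i - 2 by omega]
      exact Submodule.map_mono (inf_le_inf (h.hFanti (by omega)) le_rfl)
    exact step.trans (le_trans
      (le_iSup (fun j : ℕ => (F (m - r - j - 1) ⊓ Wc W (m - j - 2)).map (sigmaC V)) j)
      le_sup_right)

lemma ISum_mono {P Q : ℤ × ℤ → Prop} (hPQ : ∀ rs, P rs → Q rs) :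
    ISum W F P ≤ ISum W F Q :=
  iSup_mono fun rs => iSup_le fun hrs => le_iSup (fun (_ : Q rs) => Ipq W F rs.1 rs.2) (hPQ rs hrs)

lemma Ipq_le_ISum {P : ℤ × ℤ → Prop} (r s : ℤ) (hP : P (r, s)) :
    Ipq W F r s ≤ ISum W F P :=
  le_iSup₂ (f := fun rs (_ : P rs) => Ipq W F rs.1 rs.2) (r, s) hP

/-- Spanning: `W_m` is the sum of the `I^{p,q}` with `p+q ≤ m`. -/
lemma span1 (h : Hyp W F) (m : ℤ) :
    Wc W m ≤ ISum W F (fun rs => rs.1 + rs.2 ≤ m) := by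
  classical
  have key : ∀ (k : ℕ) (m : ℤ), m ≤ h.aW + k →
      Wc W m ≤ ISum W F (fun rs => rs.1 + rs.2 ≤ m) := by
    intro k
    induction k with
    | zero =>
        intro m hm
        rw [Wc_bot h (by push_cast at hm; omega)]
        exact bot_le
    | succ k ih =>
        intro m hm
        by_cases hm' : m ≤ h.aW + k
        · exact ih m hm'
        have IHprev : Wc W (m - 1) ≤ ISum W F (fun rs => rs.1 + rs.2 ≤ m - 1) :=
          ih (m - 1) (by push_cast at hm ⊢; omega)
        have IHprev' : ISum W F (fun rs => rs.1 + rs.2 ≤ m - 1) ≤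
            ISum W F (fun rs => rs.1 + rs.2 ≤ m) := ISum_mono fun rs hrs => by omega
        have onto : ∀ r : ℤ, Hh W F m r ≤ Ipq W F r (m - r) ⊔ Wc W (m - 1) := by
          intro r x hx
          obtain ⟨hx1, hx2⟩ := hx
          rcases Submodule.mem_sup.mp hx1 with ⟨x₀, hx₀, w₀, hw₀, hxe⟩
          rcases Submodule.mem_sup.mp hx2 with ⟨sy, hsy, w₁, hw₁, hxe'⟩
          have hdiff : x₀ - sy ∈ Wc W (m - 1) := by
            have : x₀ - sy = w₁ - w₀ := by
              have : x₀ + w₀ = sy + w₁ := hxe.trans hxe'.symm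
              linear_combination (norm := abel) this
            rw [this]; exact Submodule.sub_mem _ hw₁ hw₀
          rcases (mem_biSup_iff_exists_finsupp' _ _ _).mp (IHprev hdiff) with ⟨c, hcI, hc0, hcs⟩
          have hsupp : ∀ rs ∈ c.support, rs.1 + rs.2 ≤ m - 1 := by
            intro rs hrs
            by_contra hcon
            exact Finsupp.mem_support_iff.mp hrs (hc0 rs hcon)
          set cge := ∑ rs ∈ c.support.filter (fun rs => r ≤ rs.1), c rs with hcged
          set clt := ∑ rs ∈ c.support.filter (fun rs => ¬ r ≤ rs.1), c rs with hcltd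
          have hsplit : x₀ - sy = cge + clt := by
            rw [hcged, hcltd, Finset.sum_filter_add_sum_filter_not, ← hcs]; rfl
          have hcgeF : cge ∈ F r :=
            Submodule.sum_mem _ fun rs hrs => h.hFanti (Finset.mem_filter.mp hrs).2
              (Ipq_le_F rs.1 rs.2 (hcI rs))
          have hcgeW : cge ∈ Wc W (m - 1) :=
            Submodule.sum_mem _ fun rs hrs =>
              Wc_mono h (hsupp rs (Finset.mem_filter.mp hrs).1)
                (Ipq_le_Wc rs.1 rs.2 (hcI rs))
          refine Submodule.mem_sup.mpr ⟨x₀ - cge, ?_, cge + w₀,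
            Submodule.add_mem _ hcgeW hw₀, by rw [← hxe]; abel⟩
          have hrm : r + (m - r) = m := by ring
          simp only [Ipq, hrm]
          constructor
          · exact ⟨Submodule.sub_mem _ hx₀.1 hcgeF,
              Submodule.sub_mem _ hx₀.2 (Wc_mono h (by omega) hcgeW)⟩
          · have hve : x₀ - cge = sy + clt := by
              have : x₀ - cge = sy + (x₀ - sy - cge) := by abel
              rw [this, hsplit]
              congr 1
              abel
            rw [hve]
            refine Submodule.add_mem _ (le_sup_left (α := Submodule ℂ (ℂ ⊗[ℝ] V)) hsy) ?_
            refine Submodule.sum_mem _ fun rs hrs => ?_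
            have h1 := Finset.mem_filter.mp hrs
            exact I_le_T h (by omega) (hsupp rs h1.1) (hcI rs)
        have hWm : Wc W m ≤ ⨆ r : ℤ, ⨆ (_ : h.aF ≤ r), Hh W F m r := by
          have hPS := PS h m h.aF
          rw [h.haF h.aF le_rfl, top_inf_eq] at hPS
          exact fun x hx => hPS (Submodule.mem_sup.mpr ⟨x, hx, 0, Submodule.zero_mem _, add_zero _⟩)
        refine hWm.trans (iSup_le fun r => iSup_le fun _ => (onto r).trans (sup_le ?_ (IHprev.trans IHprev')))
        exact Ipq_le_ISum r (m - r) (by simp)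
  intro x hx
  exact key (m - h.aW).toNat m (by omega) hx

/-- Directness: `F^p` meets the sum of the `I^{r,s}` with `r < p` trivially. -/
lemma dirD (h : Hyp W F) (p : ℤ) {x : ℂ ⊗[ℝ] V} (hx : x ∈ F p)
    (hx' : x ∈ ISum W F (fun rs => rs.1 < p)) : x = 0 := by
  classical
  have key : ∀ (k : ℕ) (x : ℂ ⊗[ℝ] V), x ∈ F p →
      x ∈ ISum W F (fun rs => rs.1 < p ∧ rs.1 + rs.2 ≤ h.aW + k) → x = 0 := by
    intro k
    induction k with
    | zero =>
        intro x hxF hxI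
        have : ISum W F (fun rs => rs.1 < p ∧ rs.1 + rs.2 ≤ h.aW + (0 : ℕ)) ≤ ⊥ := by
          refine iSup_le fun rs => iSup_le fun hrs => ?_
          refine (Ipq_le_Wc rs.1 rs.2).trans ?_
          rw [Wc_bot h (by push_cast at hrs ⊢; omega)]
        simpa using this hxI
    | succ k ih =>
        intro x hxF hxI
        set m : ℤ := h.aW + (k + 1 : ℕ) with hmd
        rcases (mem_biSup_iff_exists_finsupp' _ _ _).mp hxI with ⟨c, hcI, hc0, hcs⟩
        have hsupp : ∀ rs ∈ c.support, rs.1 < p ∧ rs.1 + rs.2 ≤ m := by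
          intro rs hrs
          by_contra hcon
          exact Finsupp.mem_support_iff.mp hrs (hc0 rs hcon)
        set R : Finset ℤ := c.support.image Prod.fst with hRd
        have hgsupp : ∀ r : ℤ, c (r, m - r) ≠ 0 → r ∈ R := by
          intro r hr
          exact Finset.mem_image.mpr ⟨(r, m - r), Finsupp.mem_support_iff.mpr hr, rfl⟩
        set g : ℤ →₀ (ℂ ⊗[ℝ] V) := Finsupp.onFinset R (fun r => c (r, m - r)) hgsupp with hgd
        have hgapp : ∀ r : ℤ, g r = c (r, m - r) := fun r => rfl
        have hg : ∀ r, g r ∈ Hh W F m r := by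
          intro r
          have := Ipq_le_Hh h r (m - r) (hcI (r, m - r))
          rw [show r + (m - r) = m by ring] at this
          exact this
        have hg0 : ∀ r, p ≤ r → g r = 0 := by
          intro r hr
          exact hc0 (r, m - r) (by simp; omega)
        have hxW : x ∈ Wc W m := by
          rw [← hcs]
          refine Submodule.sum_mem _ fun rs hrs => ?_
          exact Wc_mono h (hsupp rs hrs).2 (Ipq_le_Wc rs.1 rs.2 (hcI rs))
        have hrest : (∑ rs ∈ c.support.filter (fun rs => ¬ rs.1 + rs.2 = m), c rs)
            ∈ Wc W (m - 1) := by
          refine Submodule.sum_mem _ fun rs hrs => ?_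
          have h1 := Finset.mem_filter.mp hrs
          exact Wc_mono h (by have := (hsupp rs h1.1).2; omega)
            (Ipq_le_Wc rs.1 rs.2 (hcI rs))
        have hgsum : (g.sum fun _ v => v) = ∑ rs ∈ c.support.filter (fun rs => rs.1 + rs.2 = m), c rs := by
          rw [hgd, Finsupp.onFinset_sum _ (fun _ => rfl)]
          rw [← Finset.sum_filter_of_ne (p := fun r => (r, m - r) ∈ c.support)
            (fun r _ hr => Finsupp.mem_support_iff.mpr hr)]
          refine Finset.sum_nbij' (fun r => ((r : ℤ), m - r)) Prod.fst ?_ ?_ ?_ ?_ ?_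
          · intro r hr
            have h1 := Finset.mem_filter.mp hr
            exact Finset.mem_filter.mpr ⟨h1.2, by simp⟩
          · intro rs hrs
            have h1 := Finset.mem_filter.mp hrs
            have h2 : rs = (rs.1, m - rs.1) := by
              ext
              · rfl
              · simp; omega
            refine Finset.mem_filter.mpr ⟨?_, ?_⟩
            · exact Finset.mem_image.mpr ⟨rs, h1.1, rfl⟩
            · rw [← h2]; exact h1.1
          · intro r _; rfl
          · intro rs hrs
            have h1 := Finset.mem_filter.mp hrs
            ext
            · rfl
            · simp; omega
          · intro r _; rfl
        have hgsum' : (g.sum fun _ v => v) ∈ (F p ⊓ Wc W m) ⊔ Wc W (m - 1) := by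
          rw [hgsum]
          have e : (∑ rs ∈ c.support.filter (fun rs => rs.1 + rs.2 = m), c rs)
              = x + (- ∑ rs ∈ c.support.filter (fun rs => ¬ rs.1 + rs.2 = m), c rs) := by
            rw [← hcs]
            rw [Finsupp.sum, ← Finset.sum_filter_add_sum_filter_not c.support
              (fun rs => rs.1 + rs.2 = m)]
            abel
          rw [e]
          exact Submodule.mem_sup.mpr ⟨x, ⟨hxF, hxW⟩, _, Submodule.neg_mem _ hrest, rfl⟩
        have hPI2 := PI2 h m p g hg hg0 hgsum'
        have htop : ∀ rs ∈ c.support, rs.1 + rs.2 ≤ m - 1 := by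
          intro rs hrs
          rcases lt_or_eq_of_le (hsupp rs hrs).2 with h1 | h1
          · omega
          · exfalso
            have h2 : rs = (rs.1, m - rs.1) := by
              ext
              · rfl
              · simp; omega
            have h3 : c rs ∈ Wc W (rs.1 + rs.2 - 1) := by
              rw [show rs.1 + rs.2 - 1 = m - 1 by omega]
              rw [h2]
              exact hPI2 rs.1
            exact Finsupp.mem_support_iff.mp hrs (Iinj h rs.1 rs.2 (hcI rs) h3)
        refine ih x hxF ?_
        refine (mem_biSup_iff_exists_finsupp' _ _ _).mpr ⟨c, hcI, ?_, hcs⟩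
        intro rs hrs
        by_contra hne
        have h1 := hsupp rs (Finsupp.mem_support_iff.mpr hne)
        have h2 := htop rs (Finsupp.mem_support_iff.mpr hne)
        push_cast at hrs ⊢
        exact hrs ⟨h1.1, by push_cast at hmd; omega⟩
  rcases (mem_biSup_iff_exists_finsupp' _ _ _).mp hx' with ⟨c, hcI, hc0, hcs⟩
  set K : ℕ := c.support.sup (fun rs => (rs.1 + rs.2 - h.aW).toNat) with hKd
  refine key K x hx ?_
  refine (mem_biSup_iff_exists_finsupp' _ _ _).mpr ⟨c, hcI, ?_, hcs⟩
  intro rs hrs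
  by_contra hne
  have h1 : rs ∈ c.support := Finsupp.mem_support_iff.mpr hne
  have h2 : (rs.1 + rs.2 - h.aW).toNat ≤ K := Finset.le_sup (f := fun rs => (rs.1 + rs.2 - h.aW).toNat) h1
  exact hrs ⟨by by_contra hp; exact hne (hc0 rs hp), by omega⟩

lemma F_antitone (hFdec : ∀ p : ℤ, F (p + 1) ≤ F p) : Antitone F := by
  have key : ∀ (k : ℕ) (p : ℤ), F (p + k) ≤ F p := by
    intro k
    induction k with
    | zero => simp
    | succ k ih =>
        intro p
        refine le_trans (le_of_eq ?_) ((hFdec (p + k)).trans (ih p))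
        congr 1; push_cast; ring
  intro p q hpq
  have hq : q = p + ((q - p).toNat : ℤ) := by
    rw [Int.toNat_of_nonneg (by omega)]; ring
  rw [hq]; exact key _ p

variable {V' : Type*} [AddCommGroup V'] [Module ℝ V']
variable {W' : ℤ → Submodule ℝ V'} {F' : ℤ → Submodule ℂ (ℂ ⊗[ℝ] V')}

lemma Ipq_map_le (f : V →ₗ[ℝ] V')
    (hfW : ∀ n : ℤ, (W n).map f ≤ W' n)
    (hfF : ∀ p : ℤ, (F p).map (f.baseChange ℂ) ≤ F' p) (p q : ℤ) {x : ℂ ⊗[ℝ] V}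
    (hx : x ∈ Ipq W F p q) : f.baseChange ℂ x ∈ Ipq W' F' p q := by
  have hσ : ∀ (q n : ℤ), ((F q ⊓ Wc W n).map (sigmaC V)).map (f.baseChange ℂ) ≤
      (F' q ⊓ Wc W' n).map (sigmaC V') := by
    rintro q n _ ⟨_, ⟨y, hy, rfl⟩, rfl⟩
    exact ⟨f.baseChange ℂ y, ⟨hfF q ⟨y, hy.1, rfl⟩, baseChange_map_le f (hfW n) hy.2⟩,
      (sigmaC_baseChange_comm f y).symm⟩
  obtain ⟨⟨h1, h2⟩, h3⟩ := hx
  refine ⟨⟨hfF p ⟨x, h1, rfl⟩, baseChange_map_le f (hfW _) h2⟩, ?_⟩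
  have hmap : (((F q ⊓ Wc W (p + q)).map (sigmaC V) ⊔
      ⨆ j : ℕ, (F (q - j - 1) ⊓ Wc W (p + q - j - 2)).map (sigmaC V)).map
        (f.baseChange ℂ)) ≤
      (F' q ⊓ Wc W' (p + q)).map (sigmaC V') ⊔
      ⨆ j : ℕ, (F' (q - j - 1) ⊓ Wc W' (p + q - j - 2)).map (sigmaC V') := by
    rw [Submodule.map_sup]
    refine sup_le ((hσ q (p + q)).trans le_sup_left) ?_
    rw [Submodule.map_iSup]
    refine iSup_le fun j => le_trans ?_ le_sup_right
    exact (hσ (q - j - 1) (p + q - j - 2)).trans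
      (le_iSup (fun j : ℕ => (F' (q - j - 1) ⊓ Wc W' (p + q - j - 2)).map (sigmaC V')) j)
  exact hmap ⟨x, h3, rfl⟩

end MHSproof

/-- Every morphism of mixed Hodge structures is strictly compatible with
the Hodge filtrations: `f_ℂ(F^p) = range(f_ℂ) ⊓ F'^p` for every `p`. -/
theorem mhs_morphism_strict_hodge (V V' : Type*)
    [AddCommGroup V] [Module ℝ V] [FiniteDimensional ℝ V]
    [AddCommGroup V'] [Module ℝ V'] [FiniteDimensional ℝ V']
    (W : ℤ → Submodule ℝ V) (F : ℤ → Submodule ℂ (ℂ ⊗[ℝ] V))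
    (W' : ℤ → Submodule ℝ V') (F' : ℤ → Submodule ℂ (ℂ ⊗[ℝ] V'))
    (hWF : IsMixedHodgeStructure V W F) (hWF' : IsMixedHodgeStructure V' W' F')
    (f : V →ₗ[ℝ] V')
    (hfW : ∀ n : ℤ, (W n).map f ≤ W' n)
    (hfF : ∀ p : ℤ, (F p).map (f.baseChange ℂ) ≤ F' p) :
    ∀ p : ℤ, (F p).map (f.baseChange ℂ) = LinearMap.range (f.baseChange ℂ) ⊓ F' p := by
  obtain ⟨hWmono, ⟨aW, haW⟩, ⟨bW, hbW⟩, hFdec, ⟨aF, haF⟩, ⟨bF, hbF⟩, hOpp⟩ := hWF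
  obtain ⟨hWmono', ⟨aW', haW'⟩, ⟨bW', hbW'⟩, hFdec', ⟨aF', haF'⟩, ⟨bF', hbF'⟩, hOpp'⟩ := hWF'
  have h : MHSproof.Hyp W F :=
    ⟨hWmono, aW, haW, MHSproof.F_antitone hFdec, aF, haF, bF, hbF,
      fun n p => (hOpp n p).1, fun n p => (hOpp n p).2⟩
  have h' : MHSproof.Hyp W' F' :=
    ⟨hWmono', aW', haW', MHSproof.F_antitone hFdec', aF', haF', bF', hbF',
      fun n p => (hOpp' n p).1, fun n p => (hOpp' n p).2⟩
  intro p
  refine le_antisymm (le_inf (Submodule.map_le_iff_le_comap.mpr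
    (fun x _ => ⟨x, rfl⟩)) (hfF p)) ?_
  rintro v' ⟨⟨x, rfl⟩, hv'F⟩
  have hxW : x ∈ MHSproof.Wc W bW := by
    rw [MHSproof.Wc, hbW bW le_rfl, Submodule.baseChange_top]
    trivial
  have hxI := MHSproof.span1 h bW hxW
  rcases (mem_biSup_iff_exists_finsupp' _ _ _).mp hxI with ⟨c, hcI, hc0, hcs⟩
  classical
  set xge := ∑ rs ∈ c.support.filter (fun rs => p ≤ rs.1), c rs with hxged
  set xlt := ∑ rs ∈ c.support.filter (fun rs => ¬ p ≤ rs.1), c rs with hxltd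
  have hxsplit : x = xge + xlt := by
    rw [hxged, hxltd, Finset.sum_filter_add_sum_filter_not, ← hcs]; rfl
  have hxgeF : xge ∈ F p :=
    Submodule.sum_mem _ fun rs hrs =>
      h.hFanti (Finset.mem_filter.mp hrs).2 (MHSproof.Ipq_le_F rs.1 rs.2 (hcI rs))
  have hfxge : f.baseChange ℂ xge ∈ F' p := hfF p ⟨xge, hxgeF, rfl⟩
  have hfxltF : f.baseChange ℂ xlt ∈ F' p := by
    have : f.baseChange ℂ xlt = f.baseChange ℂ x - f.baseChange ℂ xge := by
      rw [← map_sub]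
      congr 1
      rw [hxsplit]; abel
    rw [this]
    exact Submodule.sub_mem _ hv'F hfxge
  have hfxltI : f.baseChange ℂ xlt ∈ MHSproof.ISum W' F' (fun rs => rs.1 < p) := by
    rw [hxltd, map_sum]
    refine Submodule.sum_mem _ fun rs hrs => ?_
    have h1 := Finset.mem_filter.mp hrs
    exact MHSproof.Ipq_le_ISum rs.1 rs.2 (by simp; omega)
      (MHSproof.Ipq_map_le f hfW hfF rs.1 rs.2 (hcI rs))
  have hzero : f.baseChange ℂ xlt = 0 := MHSproof.dirD h' p hfxltF hfxltI
  refine ⟨xge, hxgeF, ?_⟩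
  rw [hxsplit, map_add, hzero, add_zero]
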